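/- Let ν be real, let m ≥ 1 be an integer, and let Ψ₀ : ℂ → ℂ be a smooth function satisfying (L_κ^{ν+mκ} Ψ₀)(z) = (ν + mκ) Ψ₀(z) for all z with 1 + κ|z|² > 0. Then the function Φ = (∇_{ν+κ} ∘ ∇_{ν+2κ} ∘ ⋯ ∘ ∇_{ν+mκ}) Ψ₀ satisfies (L_κ^ν Φ)(z) = (ν(2m+1) + m(m+1)κ) Φ(z) for all z with 1 + κ|z|² > 0. -/

import Mathlib

open Complex MeasureTheory Filter

/-- Wirtinger derivative ∂f/∂z = (1/2)(∂f/∂x − i ∂f/∂y). -/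
noncomputable def wderiv (f : ℂ → ℂ) (z : ℂ) : ℂ :=
  (fderiv ℝ f z 1 - Complex.I * fderiv ℝ f z Complex.I) / 2

/-- Anti-holomorphic Wirtinger derivative ∂f/∂z̄ = (1/2)(∂f/∂x + i ∂f/∂y). -/
noncomputable def wderivBar (f : ℂ → ℂ) (z : ℂ) : ℂ :=
  (fderiv ℝ f z 1 + Complex.I * fderiv ℝ f z Complex.I) / 2

/-- Twisted Laplacian L_κ^ν. -/
noncomputable def twistedLap (κ ν : ℝ) (f : ℂ → ℂ) (z : ℂ) : ℂ :=
  -(((1 + κ * Complex.normSq z : ℝ) : ℂ) ^ 2 * wderiv (wderivBar f) z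
    + (ν : ℂ) * ((1 + κ * Complex.normSq z : ℝ) : ℂ) *
        (z * wderiv f z - (starRingEnd ℂ) z * wderivBar f z)
    - (ν : ℂ) ^ 2 * ((Complex.normSq z : ℝ) : ℂ) * f z)

/-- (∇_α f)(z) = −(1+κ|z|²) ∂f/∂z + α z̄ f(z). -/
noncomputable def nabla (κ α : ℝ) (f : ℂ → ℂ) (z : ℂ) : ℂ :=
  -((1 + κ * Complex.normSq z : ℝ) : ℂ) * wderiv f z + (α : ℂ) * (starRingEnd ℂ) z * f z

/-- (∇*_α f)(z) = (1+κ|z|²) ∂f/∂z̄ + (α−κ) z f(z). -/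
noncomputable def nablaStar (κ α : ℝ) (f : ℂ → ℂ) (z : ℂ) : ℂ :=
  ((1 + κ * Complex.normSq z : ℝ) : ℂ) * wderivBar f z + ((α - κ : ℝ) : ℂ) * z * f z

/-- ∇_{ν+κ} ∘ ∇_{ν+2κ} ∘ ⋯ ∘ ∇_{ν+mκ} (the identity when m = 0). -/
noncomputable def nablaChain (κ : ℝ) : ℕ → ℝ → (ℂ → ℂ) → (ℂ → ℂ)
  | 0, _, f => f
  | m + 1, ν, f => nabla κ (ν + κ) (nablaChain κ m (ν + κ) f)

/-- (D g)(z) = (1+κ|z|²)² ∂g/∂z. -/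
noncomputable def Dop (κ : ℝ) (g : ℂ → ℂ) (z : ℂ) : ℂ :=
  ((1 + κ * Complex.normSq z : ℝ) : ℂ) ^ 2 * wderiv g z

/-- Generalized binomial coefficient C(r,k) for real r. -/
noncomputable def genBinom (r : ℝ) (k : ℕ) : ℝ :=
  (∏ i ∈ Finset.range k, (r - i)) / (Nat.factorial k)

/-- Jacobi polynomial P_j^{(a,b)}(x) with real parameters a, b. -/
noncomputable def jacobiP (a b : ℝ) (j : ℕ) (x : ℝ) : ℝ :=
  ∑ s ∈ Finset.range (j + 1),
    genBinom ((j : ℝ) + a) (j - s) * genBinom ((j : ℝ) + b) s *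
      ((x - 1) / 2) ^ s * ((x + 1) / 2) ^ (j - s)

/-- Pochhammer symbol (a)_n = a(a+1)⋯(a+n−1). -/
noncomputable def risingFactorial (a : ℝ) (n : ℕ) : ℝ :=
  ∏ i ∈ Finset.range n, (a + i)

section W

variable {f g : ℂ → ℂ} {z : ℂ}

@[fun_prop] lemma contDiff_conj' : ContDiff ℝ (⊤:ℕ∞) (fun w : ℂ => (starRingEnd ℂ) w) :=
  Complex.conjCLE.toContinuousLinearMap.contDiff

@[fun_prop] lemma differentiable_conj' : Differentiable ℝ (fun w : ℂ => (starRingEnd ℂ) w) :=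
  Complex.conjCLE.toContinuousLinearMap.differentiable

lemma fderiv_conj' (z : ℂ) (c : ℂ) :
    fderiv ℝ (fun w : ℂ => (starRingEnd ℂ) w) z c = (starRingEnd ℂ) c := by
  have : fderiv ℝ (fun w : ℂ => (starRingEnd ℂ) w) z = Complex.conjCLE.toContinuousLinearMap :=
    Complex.conjCLE.toContinuousLinearMap.fderiv
  rw [this]; rfl

lemma wderiv_add (hf : DifferentiableAt ℝ f z) (hg : DifferentiableAt ℝ g z) :
    wderiv (fun w => f w + g w) z = wderiv f z + wderiv g z := by
  simp only [wderiv, fderiv_fun_add hf hg, ContinuousLinearMap.add_apply]; ring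

lemma wderivBar_add (hf : DifferentiableAt ℝ f z) (hg : DifferentiableAt ℝ g z) :
    wderivBar (fun w => f w + g w) z = wderivBar f z + wderivBar g z := by
  simp only [wderivBar, fderiv_fun_add hf hg, ContinuousLinearMap.add_apply]; ring

lemma wderiv_mul (hf : DifferentiableAt ℝ f z) (hg : DifferentiableAt ℝ g z) :
    wderiv (fun w => f w * g w) z = wderiv f z * g z + f z * wderiv g z := by
  simp only [wderiv, fderiv_fun_mul hf hg, ContinuousLinearMap.add_apply,
    ContinuousLinearMap.smul_apply, smul_eq_mul]; ring

lemma wderivBar_mul (hf : DifferentiableAt ℝ f z) (hg : DifferentiableAt ℝ g z) :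
    wderivBar (fun w => f w * g w) z = wderivBar f z * g z + f z * wderivBar g z := by
  simp only [wderivBar, fderiv_fun_mul hf hg, ContinuousLinearMap.add_apply,
    ContinuousLinearMap.smul_apply, smul_eq_mul]; ring

lemma wderiv_const (c : ℂ) (z : ℂ) : wderiv (fun _ => c) z = 0 := by
  simp [wderiv, fderiv_const]

lemma wderivBar_const (c : ℂ) (z : ℂ) : wderivBar (fun _ => c) z = 0 := by
  simp [wderivBar, fderiv_const]

lemma wderiv_const_mul (hf : DifferentiableAt ℝ f z) (c : ℂ) :
    wderiv (fun w => c * f w) z = c * wderiv f z := by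
  rw [wderiv_mul (differentiableAt_const c) hf, wderiv_const]; ring

lemma wderivBar_const_mul (hf : DifferentiableAt ℝ f z) (c : ℂ) :
    wderivBar (fun w => c * f w) z = c * wderivBar f z := by
  rw [wderivBar_mul (differentiableAt_const c) hf, wderivBar_const]; ring

lemma wderiv_neg (hf : DifferentiableAt ℝ f z) :
    wderiv (fun w => -f w) z = -wderiv f z := by
  have := wderiv_const_mul hf (-1 : ℂ); simpa using this

lemma wderiv_id (z : ℂ) : wderiv (fun w => w) z = 1 := by
  simp only [wderiv, fderiv_id']
  simp [Complex.ext_iff]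

lemma wderivBar_id (z : ℂ) : wderivBar (fun w => w) z = 0 := by
  simp only [wderivBar, fderiv_id']
  simp [Complex.ext_iff]

lemma wderiv_conj (z : ℂ) : wderiv (fun w => (starRingEnd ℂ) w) z = 0 := by
  simp only [wderiv, fderiv_conj']
  simp [Complex.ext_iff]

lemma wderivBar_conj (z : ℂ) : wderivBar (fun w => (starRingEnd ℂ) w) z = 1 := by
  simp only [wderivBar, fderiv_conj']
  simp [Complex.ext_iff]

lemma contDiff_wderiv (hf : ContDiff ℝ (⊤:ℕ∞) f) : ContDiff ℝ (⊤:ℕ∞) (wderiv f) := by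
  have h1 : ContDiff ℝ (⊤:ℕ∞) (fun w => fderiv ℝ f w) := hf.fderiv_right (by simp)
  exact (((h1.clm_apply contDiff_const).sub
    (contDiff_const.mul (h1.clm_apply contDiff_const))).div_const 2)

lemma contDiff_wderivBar (hf : ContDiff ℝ (⊤:ℕ∞) f) : ContDiff ℝ (⊤:ℕ∞) (wderivBar f) := by
  have h1 : ContDiff ℝ (⊤:ℕ∞) (fun w => fderiv ℝ f w) := hf.fderiv_right (by simp)
  exact (((h1.clm_apply contDiff_const).add
    (contDiff_const.mul (h1.clm_apply contDiff_const))).div_const 2)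

end W

section Clairaut

variable {f g : ℂ → ℂ} {z : ℂ}

lemma wderiv_congr_nhds (h : f =ᶠ[nhds z] g) : wderiv f z = wderiv g z := by
  simp [wderiv, h.fderiv_eq]

lemma wderivBar_congr_nhds (h : f =ᶠ[nhds z] g) : wderivBar f z = wderivBar g z := by
  simp [wderivBar, h.fderiv_eq]

lemma wderiv_wderivBar_comm (hf : ContDiff ℝ (⊤:ℕ∞) f) (z : ℂ) :
    wderiv (wderivBar f) z = wderivBar (wderiv f) z := by
  have hD : ContDiff ℝ (⊤:ℕ∞) (fun w => fderiv ℝ f w) := hf.fderiv_right (by simp)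
  have hDd : DifferentiableAt ℝ (fun w => fderiv ℝ f w) z :=
    (hD.differentiable (by simp)).differentiableAt
  have h1 : ∀ v : ℂ, DifferentiableAt ℝ (fun w => fderiv ℝ f w v) z := fun v =>
    hDd.clm_apply (differentiableAt_const v)
  have key : ∀ v c : ℂ, fderiv ℝ (fun w => fderiv ℝ f w v) z c
      = fderiv ℝ (fun w => fderiv ℝ f w) z c v := by
    intro v c
    rw [fderiv_clm_apply hDd (differentiableAt_const v)]
    simp
  have symm : fderiv ℝ (fun w => fderiv ℝ f w) z 1 Complex.I
      = fderiv ℝ (fun w => fderiv ℝ f w) z Complex.I 1 :=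
    second_derivative_symmetric (f := f) (f' := fun w => fderiv ℝ f w)
      (fun y => ((hf.differentiable (by simp)) y).hasFDerivAt) hDd.hasFDerivAt 1 Complex.I
  have hbar : wderivBar f = fun w => (2:ℂ)⁻¹ * (fderiv ℝ f w 1)
      + ((2:ℂ)⁻¹ * Complex.I) * (fderiv ℝ f w Complex.I) := by
    funext w; simp only [wderivBar]; ring
  have hw : wderiv f = fun w => (2:ℂ)⁻¹ * (fderiv ℝ f w 1)
      - ((2:ℂ)⁻¹ * Complex.I) * (fderiv ℝ f w Complex.I) := by
    funext w; simp only [wderiv]; ring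
  have fb : ∀ c : ℂ, fderiv ℝ (wderivBar f) z c
      = (2:ℂ)⁻¹ * fderiv ℝ (fun w => fderiv ℝ f w 1) z c
        + ((2:ℂ)⁻¹ * Complex.I) * fderiv ℝ (fun w => fderiv ℝ f w Complex.I) z c := by
    intro c
    rw [hbar, fderiv_fun_add ((h1 1).const_mul _) ((h1 Complex.I).const_mul _),
      fderiv_const_mul (h1 1), fderiv_const_mul (h1 Complex.I)]
    simp
  have fw : ∀ c : ℂ, fderiv ℝ (wderiv f) z c
      = (2:ℂ)⁻¹ * fderiv ℝ (fun w => fderiv ℝ f w 1) z c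
        - ((2:ℂ)⁻¹ * Complex.I) * fderiv ℝ (fun w => fderiv ℝ f w Complex.I) z c := by
    intro c
    rw [hw, fderiv_fun_sub ((h1 1).const_mul _) ((h1 Complex.I).const_mul _),
      fderiv_const_mul (h1 1), fderiv_const_mul (h1 Complex.I)]
    simp
  simp only [wderiv, wderivBar, fb, fw, key]
  rw [symm]
  ring

end Clairaut

section Toolkit

variable {f g u : ℂ → ℂ} {z : ℂ} {κ : ℝ}

lemma diff_of_cd (hf : ContDiff ℝ (⊤:ℕ∞) f) : Differentiable ℝ f :=
  hf.differentiable (by simp)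

noncomputable def Wfun (κ : ℝ) : ℂ → ℂ := fun w => 1 + (κ:ℂ) * (w * (starRingEnd ℂ) w)

lemma contDiff_Wfun : ContDiff ℝ (⊤:ℕ∞) (Wfun κ) :=
  contDiff_const.add (contDiff_const.mul (contDiff_fun_id.mul contDiff_conj'))

lemma diff_Wfun : Differentiable ℝ (Wfun κ) := diff_of_cd contDiff_Wfun

lemma wderiv_Wfun : wderiv (Wfun κ) z = (κ:ℂ) * (starRingEnd ℂ) z := by
  unfold Wfun
  rw [wderiv_add (differentiableAt_const _)
    ((differentiableAt_const _).fun_mul (differentiableAt_fun_id.fun_mul (differentiable_conj' z))),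
    wderiv_const, wderiv_const_mul (differentiableAt_fun_id.fun_mul (differentiable_conj' z)),
    wderiv_mul differentiableAt_fun_id (differentiable_conj' z), wderiv_id, wderiv_conj]
  ring

lemma wderivBar_Wfun : wderivBar (Wfun κ) z = (κ:ℂ) * z := by
  unfold Wfun
  rw [wderivBar_add (differentiableAt_const _)
    ((differentiableAt_const _).fun_mul (differentiableAt_fun_id.fun_mul (differentiable_conj' z))),
    wderivBar_const, wderivBar_const_mul (differentiableAt_fun_id.fun_mul (differentiable_conj' z)),
    wderivBar_mul differentiableAt_fun_id (differentiable_conj' z), wderivBar_id, wderivBar_conj]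
  ring

lemma wderiv_sub (hf : DifferentiableAt ℝ f z) (hg : DifferentiableAt ℝ g z) :
    wderiv (fun w => f w - g w) z = wderiv f z - wderiv g z := by
  simp only [wderiv, fderiv_fun_sub hf hg, ContinuousLinearMap.sub_apply]; ring

lemma wderivBar_sub (hf : DifferentiableAt ℝ f z) (hg : DifferentiableAt ℝ g z) :
    wderivBar (fun w => f w - g w) z = wderivBar f z - wderivBar g z := by
  simp only [wderivBar, fderiv_fun_sub hf hg, ContinuousLinearMap.sub_apply]; ring

lemma wderivBar_neg (hf : DifferentiableAt ℝ f z) :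
    wderivBar (fun w => -f w) z = -wderivBar f z := by
  have := wderivBar_const_mul hf (-1 : ℂ); simpa using this

-- product rules with the basic factors
lemma wd_W_mul (hu : Differentiable ℝ u) :
    wderiv (fun w => Wfun κ w * u w) z = (κ:ℂ) * (starRingEnd ℂ) z * u z + Wfun κ z * wderiv u z := by
  rw [wderiv_mul (diff_Wfun z) (hu z), wderiv_Wfun]

lemma wdb_W_mul (hu : Differentiable ℝ u) :
    wderivBar (fun w => Wfun κ w * u w) z = (κ:ℂ) * z * u z + Wfun κ z * wderivBar u z := by
  rw [wderivBar_mul (diff_Wfun z) (hu z), wderivBar_Wfun]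

lemma wd_conj_mul (hu : Differentiable ℝ u) :
    wderiv (fun w => (starRingEnd ℂ) w * u w) z = (starRingEnd ℂ) z * wderiv u z := by
  rw [wderiv_mul (differentiable_conj' z) (hu z), wderiv_conj]; ring

lemma wdb_conj_mul (hu : Differentiable ℝ u) :
    wderivBar (fun w => (starRingEnd ℂ) w * u w) z
      = u z + (starRingEnd ℂ) z * wderivBar u z := by
  rw [wderivBar_mul (differentiable_conj' z) (hu z), wderivBar_conj]; ring

lemma wd_z_mul (hu : Differentiable ℝ u) :
    wderiv (fun w => w * u w) z = u z + z * wderiv u z := by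
  rw [wderiv_mul differentiableAt_fun_id (hu z), wderiv_id]; ring

lemma wdb_z_mul (hu : Differentiable ℝ u) :
    wderivBar (fun w => w * u w) z = z * wderivBar u z := by
  rw [wderivBar_mul differentiableAt_fun_id (hu z), wderivBar_id]; ring

end Toolkit

section Key

variable {f : ℂ → ℂ} {z : ℂ} {κ ν : ℝ}

lemma hcastW (κ : ℝ) (w : ℂ) : ((1 + κ * Complex.normSq w : ℝ) : ℂ) = Wfun κ w := by
  unfold Wfun; push_cast; rw [Complex.mul_conj]

lemma hcastN (w : ℂ) : ((Complex.normSq w : ℝ) : ℂ) = w * (starRingEnd ℂ) w := by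
  rw [Complex.mul_conj]

lemma contDiff_nabla (hf : ContDiff ℝ (⊤:ℕ∞) f) (κ α : ℝ) :
    ContDiff ℝ (⊤:ℕ∞) (nabla κ α f) := by
  have : nabla κ α f = fun w => -(Wfun κ w) * wderiv f w + (α:ℂ) * (starRingEnd ℂ) w * f w := by
    funext w; rw [nabla, hcastW]
  rw [this]
  exact ((contDiff_Wfun.neg.mul (contDiff_wderiv hf))).add
    ((contDiff_const.mul contDiff_conj').mul hf)

lemma key_comm (κ ν : ℝ) (f : ℂ → ℂ) (hf : ContDiff ℝ (⊤:ℕ∞) f) (z : ℂ) :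
    twistedLap κ ν (nabla κ (ν+κ) f) z
      = nabla κ (ν+κ) (twistedLap κ (ν+κ) f) z + ((2*ν+κ:ℝ):ℂ) * nabla κ (ν+κ) f z := by
  have df : Differentiable ℝ f := diff_of_cd hf
  have hP : ContDiff ℝ (⊤:ℕ∞) (wderiv f) := contDiff_wderiv hf
  have hQ : ContDiff ℝ (⊤:ℕ∞) (wderivBar f) := contDiff_wderivBar hf
  have hR : ContDiff ℝ (⊤:ℕ∞) (wderiv (wderivBar f)) := contDiff_wderiv hQ
  have dP : Differentiable ℝ (wderiv f) := diff_of_cd hP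
  have dQ : Differentiable ℝ (wderivBar f) := diff_of_cd hQ
  have dR : Differentiable ℝ (wderiv (wderivBar f)) := diff_of_cd hR
  have d1 : Differentiable ℝ (fun w => Wfun κ w * wderiv f w) := diff_Wfun.mul dP
  have d2 : Differentiable ℝ (fun w => (starRingEnd ℂ) w * f w) := differentiable_conj'.mul df
  have d3 : Differentiable ℝ (fun w => ((ν:ℂ)+κ) * ((starRingEnd ℂ) w * f w)) :=
    (differentiable_const _).mul d2
  -- g = nabla κ (ν+κ) f as explicit function
  have hg_fun : nabla κ (ν+κ) f
      = fun w => -(Wfun κ w * wderiv f w) + ((ν:ℂ)+κ) * ((starRingEnd ℂ) w * f w) := by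
    funext w; rw [nabla, hcastW]; push_cast; ring
  -- wderiv g at z
  have hgz : wderiv (nabla κ (ν+κ) f) z
      = -((κ:ℂ) * (starRingEnd ℂ) z * wderiv f z + Wfun κ z * wderiv (wderiv f) z)
        + ((ν:ℂ)+κ) * ((starRingEnd ℂ) z * wderiv f z) := by
    rw [hg_fun, wderiv_add (d1 z).fun_neg (d3 z), wderiv_neg (d1 z), wd_W_mul dP,
      wderiv_const_mul (d2 z), wd_conj_mul df]
  -- wderivBar g as explicit function (uses Clairaut)
  have hgb_fun : wderivBar (nabla κ (ν+κ) f)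
      = fun w => -((κ:ℂ) * (w * wderiv f w) + Wfun κ w * wderiv (wderivBar f) w)
        + ((ν:ℂ)+κ) * (f w + (starRingEnd ℂ) w * wderivBar f w) := by
    funext w
    rw [hg_fun, wderivBar_add (d1 w).fun_neg (d3 w), wderivBar_neg (d1 w), wdb_W_mul dP,
      wderivBar_const_mul (d2 w), wdb_conj_mul df, ← wderiv_wderivBar_comm hf w]
    ring
  -- differentiability for pieces of hgb_fun
  have dA : Differentiable ℝ (fun w => (κ:ℂ) * (w * wderiv f w)) :=
    (differentiable_const _).mul (differentiable_fun_id.mul dP)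
  have dB : Differentiable ℝ (fun w => Wfun κ w * wderiv (wderivBar f) w) := diff_Wfun.mul dR
  have dC : Differentiable ℝ (fun w => f w + (starRingEnd ℂ) w * wderivBar f w) :=
    df.add (differentiable_conj'.mul dQ)
  -- wderiv (wderivBar g) at z
  have hgbz : wderiv (wderivBar (nabla κ (ν+κ) f)) z
      = -((κ:ℂ) * (wderiv f z + z * wderiv (wderiv f) z)
          + ((κ:ℂ) * (starRingEnd ℂ) z * wderiv (wderivBar f) z
            + Wfun κ z * wderiv (wderiv (wderivBar f)) z))
        + ((ν:ℂ)+κ) * (wderiv f z + (starRingEnd ℂ) z * wderiv (wderivBar f) z) := by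
    rw [hgb_fun, wderiv_add ((dA.fun_add dB) z).fun_neg ((differentiableAt_const _).fun_mul (dC z)),
      wderiv_neg ((dA.fun_add dB) z), wderiv_add (dA z) (dB z),
      wderiv_const_mul ((differentiable_fun_id.fun_mul dP) z), wd_z_mul dP, wd_W_mul dR,
      wderiv_const_mul (dC z), wderiv_add (df z) ((differentiable_conj'.fun_mul dQ) z),
      wd_conj_mul dQ]
  -- h = twistedLap κ (ν+κ) f as explicit function
  have hh_fun : twistedLap κ (ν+κ) f = fun w =>
      -(Wfun κ w * (Wfun κ w * wderiv (wderivBar f) w)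
        + ((ν:ℂ)+κ) * (Wfun κ w * (w * wderiv f w - (starRingEnd ℂ) w * wderivBar f w))
        - ((ν:ℂ)+κ)^2 * (w * ((starRingEnd ℂ) w * f w))) := by
    funext w; rw [twistedLap, hcastW, hcastN]; push_cast; ring
  -- differentiability for pieces of hh_fun
  have dU : Differentiable ℝ (fun w => w * wderiv f w - (starRingEnd ℂ) w * wderivBar f w) :=
    (differentiable_fun_id.mul dP).sub (differentiable_conj'.mul dQ)
  have dH1 : Differentiable ℝ (fun w => Wfun κ w * (Wfun κ w * wderiv (wderivBar f) w)) :=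
    diff_Wfun.mul dB
  have dH2 : Differentiable ℝ
      (fun w => ((ν:ℂ)+κ) * (Wfun κ w * (w * wderiv f w - (starRingEnd ℂ) w * wderivBar f w))) :=
    (differentiable_const _).mul (diff_Wfun.mul dU)
  have dH3 : Differentiable ℝ (fun w => ((ν:ℂ)+κ)^2 * (w * ((starRingEnd ℂ) w * f w))) :=
    (differentiable_const _).mul (differentiable_fun_id.mul d2)
  -- wderiv h at z
  have hhz : wderiv (twistedLap κ (ν+κ) f) z
      = -(((κ:ℂ) * (starRingEnd ℂ) z * (Wfun κ z * wderiv (wderivBar f) z)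
            + Wfun κ z * ((κ:ℂ) * (starRingEnd ℂ) z * wderiv (wderivBar f) z
              + Wfun κ z * wderiv (wderiv (wderivBar f)) z))
          + ((ν:ℂ)+κ) * ((κ:ℂ) * (starRingEnd ℂ) z
              * (z * wderiv f z - (starRingEnd ℂ) z * wderivBar f z)
            + Wfun κ z * ((wderiv f z + z * wderiv (wderiv f) z)
              - (starRingEnd ℂ) z * wderiv (wderivBar f) z))
          - ((ν:ℂ)+κ)^2 * ((starRingEnd ℂ) z * f z
              + z * ((starRingEnd ℂ) z * wderiv f z))) := by
    rw [hh_fun, wderiv_neg (((dH1.fun_add dH2).fun_sub dH3) z), wderiv_sub ((dH1.fun_add dH2) z) (dH3 z),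
      wderiv_add (dH1 z) (dH2 z), wd_W_mul dB, wd_W_mul dR,
      wderiv_const_mul ((diff_Wfun.fun_mul dU) z), wd_W_mul dU,
      wderiv_sub ((differentiable_fun_id.fun_mul dP) z) ((differentiable_conj'.fun_mul dQ) z),
      wd_z_mul dP, wd_conj_mul dQ,
      wderiv_const_mul ((differentiable_fun_id.fun_mul d2) z), wd_z_mul d2, wd_conj_mul df]
  -- assemble
  rw [show twistedLap κ ν (nabla κ (ν+κ) f) z
      = -((Wfun κ z)^2 * wderiv (wderivBar (nabla κ (ν+κ) f)) z
        + (ν:ℂ) * Wfun κ z * (z * wderiv (nabla κ (ν+κ) f) z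
          - (starRingEnd ℂ) z * wderivBar (nabla κ (ν+κ) f) z)
        - (ν:ℂ)^2 * (z * (starRingEnd ℂ) z) * nabla κ (ν+κ) f z) by
      rw [twistedLap, hcastW, hcastN]]
  rw [show nabla κ (ν+κ) (twistedLap κ (ν+κ) f) z
      = -(Wfun κ z) * wderiv (twistedLap κ (ν+κ) f) z
        + ((ν:ℂ)+κ) * (starRingEnd ℂ) z * twistedLap κ (ν+κ) f z by
      rw [nabla, hcastW]; push_cast; ring]
  rw [hgbz, hgz, hhz]
  rw [show wderivBar (nabla κ (ν+κ) f) z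
      = -((κ:ℂ) * (z * wderiv f z) + Wfun κ z * wderiv (wderivBar f) z)
        + ((ν:ℂ)+κ) * (f z + (starRingEnd ℂ) z * wderivBar f z) by rw [hgb_fun]]
  rw [show nabla κ (ν+κ) f z
      = -(Wfun κ z * wderiv f z) + ((ν:ℂ)+κ) * ((starRingEnd ℂ) z * f z) by rw [hg_fun]]
  rw [show twistedLap κ (ν+κ) f z
      = -(Wfun κ z * (Wfun κ z * wderiv (wderivBar f) z)
        + ((ν:ℂ)+κ) * (Wfun κ z * (z * wderiv f z - (starRingEnd ℂ) z * wderivBar f z))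
        - ((ν:ℂ)+κ)^2 * (z * ((starRingEnd ℂ) z * f z))) by rw [hh_fun]]
  push_cast
  unfold Wfun
  ring

end Key

section Main

variable {u v : ℂ → ℂ} {z : ℂ} {κ α : ℝ}

lemma nabla_congr_nhds (h : u =ᶠ[nhds z] v) : nabla κ α u z = nabla κ α v z := by
  rw [nabla, nabla, wderiv_congr_nhds h, h.self_of_nhds]

lemma nabla_const_mul (c : ℂ) (hu : Differentiable ℝ u) :
    nabla κ α (fun w => c * u w) z = c * nabla κ α u z := by
  rw [nabla, nabla, wderiv_const_mul (hu z)]; ring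

lemma isOpen_pos_region (κ : ℝ) : IsOpen {z : ℂ | 0 < 1 + κ * Complex.normSq z} :=
  isOpen_lt continuous_const
    (continuous_const.add (continuous_const.mul Complex.continuous_normSq))

lemma contDiff_nablaChain (κ : ℝ) (m : ℕ) : ∀ (ν : ℝ) (f : ℂ → ℂ),
    ContDiff ℝ (⊤:ℕ∞) f → ContDiff ℝ (⊤:ℕ∞) (nablaChain κ m ν f) := by
  induction m with
  | zero => intro ν f hf; exact hf
  | succ m ih => intro ν f hf; exact contDiff_nabla (ih (ν+κ) f hf) κ (ν+κ)

lemma main_ind (κ : ℝ) (m : ℕ) : ∀ (ν : ℝ) (f : ℂ → ℂ), ContDiff ℝ (⊤:ℕ∞) f →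
    (∀ z : ℂ, 0 < 1 + κ * Complex.normSq z →
      twistedLap κ (ν + m * κ) f z = ((ν + m * κ : ℝ):ℂ) * f z) →
    ∀ z : ℂ, 0 < 1 + κ * Complex.normSq z →
      twistedLap κ ν (nablaChain κ m ν f) z
        = ((ν * (2 * m + 1) + m * (m + 1) * κ : ℝ):ℂ) * nablaChain κ m ν f z := by
  induction m with
  | zero =>
    intro ν f hf h z hz
    have := h z hz
    simp only [Nat.cast_zero, zero_mul, add_zero] at this
    simpa [nablaChain] using this
  | succ m ih =>
    intro ν f hf h z hz
    have hg : ContDiff ℝ (⊤:ℕ∞) (nablaChain κ m (ν+κ) f) := contDiff_nablaChain κ m (ν+κ) f hf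
    have hIH := ih (ν+κ) f hf (by
      intro w hw
      have e : (ν + κ) + (m:ℝ) * κ = ν + ((m:ℕ)+1 : ℕ) * κ := by push_cast; ring
      rw [e]; exact h w hw)
    simp only [nablaChain]
    rw [key_comm κ ν _ hg z]
    have hev : twistedLap κ (ν+κ) (nablaChain κ m (ν+κ) f) =ᶠ[nhds z]
        (fun w => ((((ν+κ) * (2*m+1) + m*(m+1)*κ : ℝ)):ℂ) * nablaChain κ m (ν+κ) f w) := by
      filter_upwards [(isOpen_pos_region κ).mem_nhds hz] with w hw using hIH w hw
    rw [nabla_congr_nhds hev, nabla_const_mul _ (diff_of_cd hg)]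
    push_cast
    ring

end Main


theorem stmt4 (κ ν : ℝ) (m : ℕ) (hm : 1 ≤ m) (Ψ₀ : ℂ → ℂ)
    (hΨ : ContDiff ℝ (⊤ : ℕ∞) Ψ₀)
    (h0 : ∀ z : ℂ, 0 < 1 + κ * Complex.normSq z →
      twistedLap κ (ν + m * κ) Ψ₀ z = ((ν + m * κ : ℝ) : ℂ) * Ψ₀ z) :
    ∀ z : ℂ, 0 < 1 + κ * Complex.normSq z →
      twistedLap κ ν (nablaChain κ m ν Ψ₀) z
        = ((ν * (2 * m + 1) + m * (m + 1) * κ : ℝ) : ℂ) * nablaChain κ m ν Ψ₀ z := by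
  exact main_ind κ m ν Ψ₀ hΨ h0
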